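/- Define r_{2,n} = ((n-1)!/√5) * ( ((3+√5)/2)^n − ((3−√5)/2)^n ) for n ≥ 1 and r_{2,0} = 1. Then the exponential generating function R_2(z) = Σ_{n≥0} r_{2,n} z^n/n! satisfies (z^2 − 3z + 1) R_2''(z) + (2z − 3) R_2'(z) = 0 with R_2(0) = 1 and R_2'(0) = 1. -/

import Mathlib

open Real Filter

/-- The EGF of relaxed binary trees of right height at most 2 satisfies
`(z²-3z+1) R₂'' + (2z-3) R₂' = 0`, `R₂(0)=1`, `R₂'(0)=1`. -/
theorem stmt_4 (r : ℕ → ℝ)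
    (h0 : r 0 = 1)
    (hn : ∀ n : ℕ, 1 ≤ n →
      r n = ((n - 1).factorial : ℝ) / Real.sqrt 5 *
        (((3 + Real.sqrt 5) / 2) ^ n - ((3 - Real.sqrt 5) / 2) ^ n))
    (R : ℝ → ℝ)
    (hR : R = fun z : ℝ => ∑' n : ℕ, r n * z ^ n / n.factorial) :
    R 0 = 1 ∧ deriv R 0 = 1 ∧
    ∀ z : ℝ, |z| < (3 - Real.sqrt 5) / 2 →
      (z ^ 2 - 3 * z + 1) * deriv (deriv R) z + (2 * z - 3) * deriv R z = 0 := by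
  have s5 : Real.sqrt 5 ^ 2 = 5 := Real.sq_sqrt (by norm_num)
  have s5pos : (0:ℝ) < Real.sqrt 5 := Real.sqrt_pos.mpr (by norm_num)
  have s5lt3 : Real.sqrt 5 < 3 := by nlinarith
  set α : ℝ := (3 + Real.sqrt 5) / 2 with hα
  set β : ℝ := (3 - Real.sqrt 5) / 2 with hβ
  clear_value α β
  have hαpos : 0 < α := by rw [hα]; positivity
  have hβpos : 0 < β := by rw [hβ]; nlinarith
  have hαβ : α * β = 1 := by rw [hα, hβ]; nlinarith
  have hαβ' : α - β = Real.sqrt 5 := by rw [hα, hβ]; ring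
  -- basic facts on the ball
  have habs : ∀ z : ℝ, |z| < β → |α * z| < 1 ∧ |β * z| < 1 := by
    intro z hz
    constructor
    · rw [abs_mul, abs_of_pos hαpos]
      calc α * |z| < α * β := by exact (mul_lt_mul_iff_right₀ hαpos).mpr hz
        _ = 1 := hαβ
    · rw [abs_mul, abs_of_pos hβpos]
      have hβ1 : β < 1 := by rw [hβ]; nlinarith
      nlinarith [abs_nonneg z]
  have hne : ∀ z : ℝ, |z| < β → 1 - α * z ≠ 0 ∧ 1 - β * z ≠ 0 ∧
      z ^ 2 - 3 * z + 1 ≠ 0 := by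
    intro z hz
    obtain ⟨h1, h2⟩ := habs z hz
    have e1 : 1 - α * z ≠ 0 := by
      intro h; rw [abs_lt] at h1; nlinarith [h1.1, h1.2]
    have e2 : 1 - β * z ≠ 0 := by
      intro h; rw [abs_lt] at h2; nlinarith [h2.1, h2.2]
    refine ⟨e1, e2, ?_⟩
    have hq : (1 - α * z) * (1 - β * z) = z ^ 2 - 3 * z + 1 := by
      have h3 : α + β = 3 := by rw [hα, hβ]; ring
      linear_combination z ^ 2 * hαβ - z * h3
    rw [← hq]; exact mul_ne_zero e1 e2
  have hqprod : ∀ z : ℝ, (1 - α * z) * (1 - β * z) = z ^ 2 - 3 * z + 1 := by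
    intro z
    have h3 : α + β = 3 := by rw [hα, hβ]; ring
    linear_combination z ^ 2 * hαβ - z * h3
  -- key: R = F on the ball
  have hRF : ∀ z : ℝ, |z| < β → R z =
      1 + (Real.sqrt 5)⁻¹ * (Real.log (1 - β * z) - Real.log (1 - α * z)) := by
    intro z hz
    obtain ⟨h1, h2⟩ := habs z hz
    have hs1 := Real.hasSum_pow_div_log_of_abs_lt_one h1
    have hs2 := Real.hasSum_pow_div_log_of_abs_lt_one h2
    have hs := (hs2.sub hs1).mul_left (Real.sqrt 5)⁻¹
    have heq : ∀ n : ℕ, -((Real.sqrt 5)⁻¹ *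
        ((β * z) ^ (n + 1) / (n + 1) - (α * z) ^ (n + 1) / (n + 1)))
        = r (n + 1) * z ^ (n + 1) / (n + 1).factorial := by
      intro n
      rw [hn (n + 1) (Nat.le_add_left 1 n)]
      simp only [Nat.add_sub_cancel, Nat.factorial_succ, mul_pow]
      have hf : (n.factorial : ℝ) ≠ 0 := Nat.cast_ne_zero.mpr n.factorial_ne_zero
      have hn1 : ((n:ℝ) + 1) ≠ 0 := by positivity
      push_cast
      field_simp
      ring
    have hs' : HasSum (fun n : ℕ => r (n + 1) * z ^ (n + 1) / (n + 1).factorial)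
        ((Real.sqrt 5)⁻¹ * (Real.log (1 - β * z) - Real.log (1 - α * z))) := by
      have h' := hs.neg
      simp only [heq] at h'
      convert h' using 1
      · rfl
      · ring
    have hsum : HasSum (fun n : ℕ => r n * z ^ n / n.factorial)
        (1 + (Real.sqrt 5)⁻¹ * (Real.log (1 - β * z) - Real.log (1 - α * z))) := by
      have h'' := (hasSum_nat_add_iff (f := fun n : ℕ => r n * z ^ n / n.factorial) 1).mp hs'
      simpa [h0, add_comm] using h''
    rw [hR]
    exact hsum.tsum_eq
  have hopen : IsOpen {z : ℝ | |z| < β} := by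
    have hset : {z : ℝ | |z| < β} = Metric.ball (0:ℝ) β := by
      ext z; simp [Metric.mem_ball, Real.dist_eq]
    rw [hset]; exact Metric.isOpen_ball
  -- first derivative
  have hdRG : ∀ z : ℝ, |z| < β → deriv R z = (z ^ 2 - 3 * z + 1)⁻¹ := by
    intro z hz
    obtain ⟨e1, e2, e3⟩ := hne z hz
    have hev : R =ᶠ[nhds z] fun w =>
        1 + (Real.sqrt 5)⁻¹ * (Real.log (1 - β * w) - Real.log (1 - α * w)) :=
      Filter.eventuallyEq_of_mem (hopen.mem_nhds hz) hRF
    rw [hev.deriv_eq]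
    have hin1 : HasDerivAt (fun w : ℝ => 1 - β * w) (-β) z := by
      simpa using ((hasDerivAt_id' z).const_mul β).const_sub 1
    have hin2 : HasDerivAt (fun w : ℝ => 1 - α * w) (-α) z := by
      simpa using ((hasDerivAt_id' z).const_mul α).const_sub 1
    have hd1 : HasDerivAt (fun w : ℝ => Real.log (1 - β * w)) ((1 - β * z)⁻¹ * (-β)) z :=
      (Real.hasDerivAt_log e2).comp (h₂ := Real.log) z hin1
    have hd2 : HasDerivAt (fun w : ℝ => Real.log (1 - α * w)) ((1 - α * z)⁻¹ * (-α)) z :=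
      (Real.hasDerivAt_log e1).comp (h₂ := Real.log) z hin2
    have hdF : HasDerivAt (fun w : ℝ =>
        1 + (Real.sqrt 5)⁻¹ * (Real.log (1 - β * w) - Real.log (1 - α * w)))
        ((Real.sqrt 5)⁻¹ * ((1 - β * z)⁻¹ * (-β) - (1 - α * z)⁻¹ * (-α))) z :=
      ((hd1.sub hd2).const_mul (Real.sqrt 5)⁻¹).const_add 1
    rw [hdF.deriv, ← hqprod z]
    field_simp [e1, e2, mul_comm z]
    linear_combination hαβ'
  -- conclusion
  refine ⟨?_, ?_, ?_⟩
  · have h0β : |(0:ℝ)| < β := by simpa using hβpos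
    rw [hRF 0 h0β]
    simp
  · have h0β : |(0:ℝ)| < β := by simpa using hβpos
    rw [hdRG 0 h0β]
    norm_num
  · intro z hz
    obtain ⟨e1, e2, e3⟩ := hne z hz
    have hev : deriv R =ᶠ[nhds z] fun w => (w ^ 2 - 3 * w + 1)⁻¹ :=
      Filter.eventuallyEq_of_mem (hopen.mem_nhds hz) hdRG
    rw [hev.deriv_eq, hdRG z hz]
    have hq : HasDerivAt (fun w : ℝ => w ^ 2 - 3 * w + 1) (2 * z - 3) z := by
      have h := ((hasDerivAt_pow 2 z).sub ((hasDerivAt_id z).const_mul 3)).add_const 1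
      convert h using 1
      · rfl
      · rfl
      · funext w; simp
      · push_cast
        ring
    have hdG : HasDerivAt (fun w : ℝ => (w ^ 2 - 3 * w + 1)⁻¹)
        (-(2 * z - 3) / (z ^ 2 - 3 * z + 1) ^ 2) z := hq.inv e3
    rw [hdG.deriv]
    field_simp
    ring
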